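/- For all λ, t ∈ [0,1] and all 4×4 complex Hermitian matrices B⁺, B⁻ with 0 ⪯ B⁺ ⪯ I₄ and 0 ⪯ B⁻ ⪯ I₄, one has tr(B⁺·Π_z⁺) + tr(B⁻·Π_z⁻) ≤ s_a(λ,t). -/

import Mathlib

open Matrix Kronecker ComplexOrder

noncomputable section

/-- Pauli matrices. -/
def pauliX : Matrix (Fin 2) (Fin 2) ℂ := !![0, 1; 1, 0]
def pauliY : Matrix (Fin 2) (Fin 2) ℂ := !![0, -Complex.I; Complex.I, 0]
def pauliZ : Matrix (Fin 2) (Fin 2) ℂ := !![1, 0; 0, -1]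

/-- `Λ = (1-λ)(1+3λ)`. -/
def Lambda (lam : ℝ) : ℝ := (1 - lam) * (1 + 3 * lam)

/-- `R = √(Λ + 4t²λ²)`. -/
def Rr (lam t : ℝ) : ℝ := Real.sqrt (Lambda lam + 4 * t ^ 2 * lam ^ 2)

/-- `s_a(λ,t) = (1/2)(1 - λ + R)`. -/
def sA (lam t : ℝ) : ℝ := (1 / 2) * (1 - lam + Rr lam t)

/-- `s_c(λ,t) = (1/2)(1 - λ + √Λ)√(1-t²)`. -/
def sC (lam t : ℝ) : ℝ :=
  (1 / 2) * (1 - lam + Real.sqrt (Lambda lam)) * Real.sqrt (1 - t ^ 2)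

/-- The 4×4 Hermitian matrix `Π_z^ε` (`ε = ±1`), with diagonal
`(1/4)(−(1−εt)(1−λ), (1+εt)(1−λ), εt(1+λ), εt(1+λ))`, entries `(3,4)` and `(4,3)` equal to
`−R/4`, and all other entries `0`.  The index `Fin 2 × Fin 2` is ordered
`(0,0),(0,1),(1,0),(1,1)`. -/
def Piz (lam t ε : ℝ) : Matrix (Fin 2 × Fin 2) (Fin 2 × Fin 2) ℂ :=
  (!![1, 0; 0, 0] : Matrix (Fin 2) (Fin 2) ℂ) ⊗ₖ
    !![((-(1 - ε * t) * (1 - lam) / 4 : ℝ) : ℂ), 0;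
       0, (((1 + ε * t) * (1 - lam) / 4 : ℝ) : ℂ)] +
  (!![0, 0; 0, 1] : Matrix (Fin 2) (Fin 2) ℂ) ⊗ₖ
    !![((ε * t * (1 + lam) / 4 : ℝ) : ℂ), ((-(Rr lam t) / 4 : ℝ) : ℂ);
       ((-(Rr lam t) / 4 : ℝ) : ℂ), ((ε * t * (1 + lam) / 4 : ℝ) : ℂ)]

/-- `T_pp = √((1+λ+2λ√(1−t²))(1+√((1−t²)Λ)/R))`. -/
def Tpp (lam t : ℝ) : ℝ :=
  Real.sqrt ((1 + lam + 2 * lam * Real.sqrt (1 - t ^ 2)) *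
    (1 + Real.sqrt ((1 - t ^ 2) * Lambda lam) / Rr lam t))

/-- `T_pm = √((1+λ+2λ√(1−t²))(1−√((1−t²)Λ)/R))`. -/
def Tpm (lam t : ℝ) : ℝ :=
  Real.sqrt ((1 + lam + 2 * lam * Real.sqrt (1 - t ^ 2)) *
    (1 - Real.sqrt ((1 - t ^ 2) * Lambda lam) / Rr lam t))

/-- `T_mp = √((1+λ−2λ√(1−t²))(1+√((1−t²)Λ)/R))`. -/
def Tmp (lam t : ℝ) : ℝ :=
  Real.sqrt ((1 + lam - 2 * lam * Real.sqrt (1 - t ^ 2)) *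
    (1 + Real.sqrt ((1 - t ^ 2) * Lambda lam) / Rr lam t))

/-- `T_mm = √((1+λ−2λ√(1−t²))(1−√((1−t²)Λ)/R))`. -/
def Tmm (lam t : ℝ) : ℝ :=
  Real.sqrt ((1 + lam - 2 * lam * Real.sqrt (1 - t ^ 2)) *
    (1 - Real.sqrt ((1 - t ^ 2) * Lambda lam) / Rr lam t))

/-- The 2×2 matrix `E_ε` (`ε = ±1`). -/
def Emat (lam t ε : ℝ) : Matrix (Fin 2) (Fin 2) ℂ :=
  !![((-Real.sqrt (1 - ε * t) * (Tmp lam t + ε * Tpm lam t) : ℝ) : ℂ),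
     ((Real.sqrt (1 - ε * t) * (Tpp lam t + ε * Tmm lam t) : ℝ) : ℂ);
     ((Real.sqrt (1 + ε * t) * (Tmp lam t - ε * Tpm lam t) : ℝ) : ℂ),
     ((Real.sqrt (1 + ε * t) * (Tpp lam t - ε * Tmm lam t) : ℝ) : ℂ)]

/-- The 2×2 matrix `F_ε` (`ε = ±1`). -/
def Fmat (lam t ε : ℝ) : Matrix (Fin 2) (Fin 2) ℂ :=
  !![-Complex.I * ((Real.sqrt (1 - ε * t) * (Tmp lam t + ε * Tpm lam t) : ℝ) : ℂ),
     Complex.I * ((Real.sqrt (1 - ε * t) * (Tpp lam t + ε * Tmm lam t) : ℝ) : ℂ);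
     -Complex.I * ((Real.sqrt (1 + ε * t) * (Tmp lam t - ε * Tpm lam t) : ℝ) : ℂ),
     -Complex.I * ((Real.sqrt (1 + ε * t) * (Tpp lam t - ε * Tmm lam t) : ℝ) : ℂ)]

/-- `Π_x^ε = (√(1−λ)/8) [[0, E_ε], [E_ε^*, 0]]` in 2×2 block form. -/
def Pix (lam t ε : ℝ) : Matrix (Fin 2 × Fin 2) (Fin 2 × Fin 2) ℂ :=
  ((Real.sqrt (1 - lam) / 8 : ℝ) : ℂ) •
    ((!![0, 1; 0, 0] : Matrix (Fin 2) (Fin 2) ℂ) ⊗ₖ Emat lam t ε +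
     (!![0, 0; 1, 0] : Matrix (Fin 2) (Fin 2) ℂ) ⊗ₖ (Emat lam t ε)ᴴ)

/-- `Π_y^ε = (√(1−λ)/8) [[0, F_ε], [F_ε^*, 0]]` in 2×2 block form. -/
def Piy (lam t ε : ℝ) : Matrix (Fin 2 × Fin 2) (Fin 2 × Fin 2) ℂ :=
  ((Real.sqrt (1 - lam) / 8 : ℝ) : ℂ) •
    ((!![0, 1; 0, 0] : Matrix (Fin 2) (Fin 2) ℂ) ⊗ₖ Fmat lam t ε +
     (!![0, 0; 1, 0] : Matrix (Fin 2) (Fin 2) ℂ) ⊗ₖ (Fmat lam t ε)ᴴ)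

end


noncomputable section AuxAligned

/-- Auxiliary 4×4 matrix with diagonal `(d1, d2, d3, d3)` (block form) and
entries `(3,4)`, `(4,3)` equal to `o`. -/
def M4 (d1 d2 d3 o : ℝ) : Matrix (Fin 2 × Fin 2) (Fin 2 × Fin 2) ℂ :=
  (!![1, 0; 0, 0] : Matrix (Fin 2) (Fin 2) ℂ) ⊗ₖ !![(d1 : ℂ), 0; 0, (d2 : ℂ)] +
  (!![0, 0; 0, 1] : Matrix (Fin 2) (Fin 2) ℂ) ⊗ₖ !![(d3 : ℂ), (o : ℂ); (o : ℂ), (d3 : ℂ)]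

/-- Auxiliary factor matrix: `W4ᴴ * W4 = M4` (when `o = ±1`). -/
def W4 (d1 d2 d3 o : ℝ) : Matrix (Fin 2 × Fin 2) (Fin 2 × Fin 2) ℂ :=
  (!![1, 0; 0, 0] : Matrix (Fin 2) (Fin 2) ℂ) ⊗ₖ
    !![(Real.sqrt d1 : ℂ), 0; 0, (Real.sqrt d2 : ℂ)] +
  (!![0, 0; 0, 1] : Matrix (Fin 2) (Fin 2) ℂ) ⊗ₖ
    !![(Real.sqrt d3 : ℂ), (o * Real.sqrt d3 : ℂ); 0, 0]

end AuxAligned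

lemma M4_sub (x1 x2 x3 x4 y1 y2 y3 y4 : ℝ) :
    M4 x1 x2 x3 x4 - M4 y1 y2 y3 y4 = M4 (x1 - y1) (x2 - y2) (x3 - y3) (x4 - y4) := by
  ext ⟨i, j⟩ ⟨k, l⟩
  fin_cases i <;> fin_cases j <;> fin_cases k <;> fin_cases l <;> simp [M4]

lemma M4_congr {a b c d a' b' c' d' : ℝ} (h1 : a = a') (h2 : b = b') (h3 : c = c')
    (h4 : d = d') : M4 a b c d = M4 a' b' c' d' := by rw [h1, h2, h3, h4]

lemma M4_trace (d1 d2 d3 o : ℝ) : (M4 d1 d2 d3 o).trace = ((d1 + d2 + 2 * d3 : ℝ) : ℂ) := by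
  simp [M4, Matrix.trace, Fintype.sum_prod_type, Fin.sum_univ_two]
  push_cast; ring

lemma M4_posSemidef (d1 d2 d3 : ℝ) (o : ℝ) (ho : o = 1 ∨ o = -1)
    (h1 : 0 ≤ d1) (h2 : 0 ≤ d2) (h3 : 0 ≤ d3) :
    (M4 d1 d2 d3 (o * d3)).PosSemidef := by
  have key : (W4 d1 d2 d3 o)ᴴ * W4 d1 d2 d3 o = M4 d1 d2 d3 (o * d3) := by
    ext ⟨i, j⟩ ⟨k, l⟩
    have sq1 : (Real.sqrt d1 : ℂ) ^ 2 = (d1 : ℂ) := by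
      rw [sq]; norm_cast; exact Real.mul_self_sqrt h1
    have sq2 : (Real.sqrt d2 : ℂ) ^ 2 = (d2 : ℂ) := by
      rw [sq]; norm_cast; exact Real.mul_self_sqrt h2
    have sq3 : (Real.sqrt d3 : ℂ) ^ 2 = (d3 : ℂ) := by
      rw [sq]; norm_cast; exact Real.mul_self_sqrt h3
    have hoo : (o : ℂ) ^ 2 = 1 := by
      rcases ho with h | h <;> simp [h]
    fin_cases i <;> fin_cases j <;> fin_cases k <;> fin_cases l <;>
      simp [M4, W4, Matrix.mul_apply, Fintype.sum_prod_type, Fin.sum_univ_two] <;>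
      push_cast <;> ring_nf <;>
      simp [sq1, sq2, sq3, hoo] <;>
      ring
  rw [← key]
  exact Matrix.posSemidef_conjTranspose_mul_self _

lemma trace_nonneg_of_psd {n : Type*} [Fintype n] [DecidableEq n]
    {X : Matrix n n ℂ} (hX : X.PosSemidef) : 0 ≤ X.trace := by
  rw [Matrix.trace]
  apply Finset.sum_nonneg
  intro i _
  exact hX.diag_nonneg

open scoped MatrixOrder in
lemma trace_mul_nonneg_of_psd {n : Type*} [Fintype n] [DecidableEq n]
    {X Y : Matrix n n ℂ} (hX : X.PosSemidef) (hY : Y.PosSemidef) :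
    0 ≤ (X * Y).trace := by
  have h1 : X * Y = X * (CFC.sqrt Y * CFC.sqrt Y) := by rw [CFC.sqrt_mul_sqrt_self Y hY.nonneg]
  have h2 : (X * Y).trace = (CFC.sqrt Y * X * (CFC.sqrt Y)ᴴ).trace := by
    rw [h1, (CFC.sqrt_nonneg Y).posSemidef.1.eq, ← Matrix.trace_mul_cycle, Matrix.mul_assoc]
  rw [h2]
  exact trace_nonneg_of_psd (hX.mul_mul_conjTranspose_same _)

lemma trace_effect_le {n : Type*} [Fintype n] [DecidableEq n]
    {B P N : Matrix n n ℂ} (hB0 : B.PosSemidef) (hB1 : (1 - B).PosSemidef)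
    (hP : P.PosSemidef) (hN : N.PosSemidef) :
    (B * (P - N)).trace ≤ P.trace := by
  have e : (B * (P - N)).trace = (B * P).trace - (B * N).trace := by
    rw [Matrix.mul_sub, Matrix.trace_sub]
  have h1 : 0 ≤ (B * N).trace := trace_mul_nonneg_of_psd hB0 hN
  have h2 : (B * P).trace ≤ P.trace := by
    have h3 : 0 ≤ ((1 - B) * P).trace := trace_mul_nonneg_of_psd hB1 hP
    have e2 : ((1 - B) * P).trace = P.trace - (B * P).trace := by
      rw [Matrix.sub_mul, Matrix.one_mul, Matrix.trace_sub]
    rw [e2] at h3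
    exact sub_nonneg.mp h3
  rw [e]
  exact le_trans (sub_le_self _ h1) h2
/-- **Primal bound, aligned case.** For all `λ, t ∈ [0,1]` and all effects
`0 ⪯ B⁺, B⁻ ⪯ I₄`, one has `tr(B⁺ Π_z⁺) + tr(B⁻ Π_z⁻) ≤ s_a(λ,t)`. -/
theorem aligned_primal_bound (lam t : ℝ)
    (hlam : lam ∈ Set.Icc (0 : ℝ) 1) (ht : t ∈ Set.Icc (0 : ℝ) 1)
    (Bp Bm : Matrix (Fin 2 × Fin 2) (Fin 2 × Fin 2) ℂ)
    (hBp0 : Bp.PosSemidef) (hBp1 : (1 - Bp).PosSemidef)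
    (hBm0 : Bm.PosSemidef) (hBm1 : (1 - Bm).PosSemidef) :
    ((Bp * Piz lam t 1).trace + (Bm * Piz lam t (-1)).trace).re ≤ sA lam t := by
  obtain ⟨hl0, hl1⟩ := hlam
  obtain ⟨ht0, ht1⟩ := ht
  set R := Rr lam t with hRdef
  have hR0 : 0 ≤ R := Real.sqrt_nonneg _
  have hL0 : 0 ≤ Lambda lam := by unfold Lambda; nlinarith
  have hpaR : t * (1 + lam) ≤ R := by
    have h1 : 0 ≤ (1 - t ^ 2) * Lambda lam := mul_nonneg (by nlinarith) hL0
    have h2 : (t * (1 + lam)) ^ 2 ≤ Lambda lam + 4 * t ^ 2 * lam ^ 2 := by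
      unfold Lambda at h1 ⊢; nlinarith
    calc t * (1 + lam) = Real.sqrt ((t * (1 + lam)) ^ 2) :=
          (Real.sqrt_sq (by nlinarith)).symm
      _ ≤ R := Real.sqrt_le_sqrt h2
  have hb : 0 ≤ (1 + 1 * t) * (1 - lam) / 4 := by nlinarith
  have hn : 0 ≤ (1 + -1 * t) * (1 - lam) / 4 := by nlinarith
  have hc1 : 0 ≤ (t * (1 + lam) + R) / 8 := by nlinarith
  have hc2 : 0 ≤ (R - t * (1 + lam)) / 8 := by nlinarith
  have hPp := M4_posSemidef 0 ((1 + 1 * t) * (1 - lam) / 4) ((t * (1 + lam) + R) / 8)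
    (-1) (Or.inr rfl) le_rfl hb hc1
  have hNp := M4_posSemidef ((1 + -1 * t) * (1 - lam) / 4) 0 ((R - t * (1 + lam)) / 8)
    1 (Or.inl rfl) hn le_rfl hc2
  have hPm := M4_posSemidef 0 ((1 + -1 * t) * (1 - lam) / 4) ((R - t * (1 + lam)) / 8)
    (-1) (Or.inr rfl) le_rfl hn hc2
  have hNm := M4_posSemidef ((1 + 1 * t) * (1 - lam) / 4) 0 ((t * (1 + lam) + R) / 8)
    1 (Or.inl rfl) hb le_rfl hc1
  have hPizE : ∀ ε : ℝ, Piz lam t ε =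
      M4 (-(1 - ε * t) * (1 - lam) / 4) ((1 + ε * t) * (1 - lam) / 4)
        (ε * t * (1 + lam) / 4) (-R / 4) := fun ε => rfl
  have hdecp : Piz lam t 1 =
      M4 0 ((1 + 1 * t) * (1 - lam) / 4) ((t * (1 + lam) + R) / 8)
        (-1 * ((t * (1 + lam) + R) / 8)) -
      M4 ((1 + -1 * t) * (1 - lam) / 4) 0 ((R - t * (1 + lam)) / 8)
        (1 * ((R - t * (1 + lam)) / 8)) := by
    rw [M4_sub, hPizE 1]
    exact M4_congr (by ring) (by ring) (by ring) (by ring)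
  have hdecm : Piz lam t (-1) =
      M4 0 ((1 + -1 * t) * (1 - lam) / 4) ((R - t * (1 + lam)) / 8)
        (-1 * ((R - t * (1 + lam)) / 8)) -
      M4 ((1 + 1 * t) * (1 - lam) / 4) 0 ((t * (1 + lam) + R) / 8)
        (1 * ((t * (1 + lam) + R) / 8)) := by
    rw [M4_sub, hPizE (-1)]
    exact M4_congr (by ring) (by ring) (by ring) (by ring)
  have h1 : (Bp * Piz lam t 1).trace ≤
      (M4 0 ((1 + 1 * t) * (1 - lam) / 4) ((t * (1 + lam) + R) / 8)
        (-1 * ((t * (1 + lam) + R) / 8))).trace := by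
    rw [hdecp]; exact trace_effect_le hBp0 hBp1 hPp hNp
  have h2 : (Bm * Piz lam t (-1)).trace ≤
      (M4 0 ((1 + -1 * t) * (1 - lam) / 4) ((R - t * (1 + lam)) / 8)
        (-1 * ((R - t * (1 + lam)) / 8))).trace := by
    rw [hdecm]; exact trace_effect_le hBm0 hBm1 hPm hNm
  have hsum := add_le_add h1 h2
  rw [M4_trace, M4_trace, ← Complex.ofReal_add] at hsum
  have hre := (Complex.le_def.mp hsum).1
  rw [Complex.ofReal_re] at hre
  refine hre.trans (le_of_eq ?_)
  unfold sA
  ring
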